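/- Let k, r, s ∈ ℕ. In the ring ℚ⟦q⟧⟦X⟧ of formal power series, exp( Σ_{n≥1} ((−1)^{n+1}/n) · ℬ_{1,nk,nr,ns}(q) · X^n ) = Σ_{j≥0} ℬ_{j,k,r,s}(q) · X^j, where ℬ_{0,k,r,s}(q) := 1. In particular, for each a ∈ ℕ, ℬ_{a,k,r,s} is a polynomial of degree at most a, with rational coefficients, in the series ℬ_{1,nk,nr,ns} for 1 ≤ n ≤ a. -/

import Mathlib

open PowerSeries Finset
open scoped Classical

noncomputable section

/-- `(1 - q^n)^(-k)` in `ℚ⟦q⟧`, for `k : ℤ` (for negative `k` this is the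
power `(1 - q^n)^{|k|}`). -/
def dFac (n : ℕ) (k : ℤ) : PowerSeries ℚ :=
  if 0 ≤ k then ((1 - (X : PowerSeries ℚ) ^ n)⁻¹) ^ k.toNat
  else (1 - (X : PowerSeries ℚ) ^ n) ^ (-k).toNat

/-- Strictly increasing `a`-tuples `1 ≤ n₁ < n₂ < ⋯ < n_a ≤ N`. -/
def strictTuples (a N : ℕ) : Finset (Fin a → ℕ) :=
  (Fintype.piFinset fun _ : Fin a => Finset.Icc 1 N).filter fun f => StrictMono f

/-- The coefficient `d_{a,k,r,s}(N)` of `q^N` in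
`ℬ_{a,k,r,s}(q) = Σ_{1≤n₁<⋯<n_a} q^{r(n₁²+⋯+n_a²)+s(n₁+⋯+n_a)} / ∏_j (1-q^{n_j})^k`.
Since `r, s ≥ 1`, tuples containing an entry `> N` contribute `0` to the coefficient of `q^N`,
so the (q-adically convergent) infinite sum can be truncated to entries in `[1, N]`. -/
def Bcoeff (a : ℕ) (k : ℤ) (r s : ℕ) (N : ℕ) : ℚ :=
  ∑ f ∈ strictTuples a N,
    PowerSeries.coeff (R := ℚ) N
      ((X : PowerSeries ℚ) ^ (r * (∑ j, (f j) ^ 2) + s * ∑ j, f j) * ∏ j, dFac (f j) k)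

/-- The exponential of a power series `f ∈ ℚ⟦q⟧⟦X⟧` with zero constant term (in `X`):
`exp f = Σ_{m≥0} f^m / m!`.  Since `f` has no constant term, `f^m` has `X`-order at least
`m`, so the coefficient of `X^j` only involves `f^m` for `m ≤ j`. -/
def expX (f : PowerSeries (PowerSeries ℚ)) : PowerSeries (PowerSeries ℚ) :=
  PowerSeries.mk fun j => ∑ m ∈ Finset.range (j + 1),
    ((m.factorial : ℚ)⁻¹) • (PowerSeries.coeff (R := PowerSeries ℚ) j (f ^ m))

/-- The power series `ℬ_{a,k,r,s}(q) ∈ ℚ⟦q⟧`; note `ℬ_{0,k,r,s} = 1`. -/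
def Bser (a : ℕ) (k : ℤ) (r s : ℕ) : PowerSeries ℚ := PowerSeries.mk (Bcoeff a k r s)

/-! ### Auxiliary definitions -/

/-- The single-term series `t_m = q^{r m² + s m} (1-q^m)^{-k}`. -/
def tser (k r s m : ℕ) : PowerSeries ℚ := X ^ (r * m ^ 2 + s * m) * dFac m (k : ℤ)

/-- Elementary symmetric function of the `t_m`, `1 ≤ m ≤ N`. -/
def Esym (k r s N a : ℕ) : PowerSeries ℚ :=
  ∑ S ∈ Finset.powersetCard a (Finset.Icc 1 N), ∏ m ∈ S, tser k r s m

/-- Power sum of the `t_m`, `1 ≤ m ≤ N`. -/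
def Psum (k r s N n : ℕ) : PowerSeries ℚ :=
  ∑ m ∈ Finset.Icc 1 N, tser k r s m ^ n

lemma X_pow_dvd_tser {s : ℕ} (hs : 1 ≤ s) (k r m : ℕ) :
    (X : PowerSeries ℚ) ^ m ∣ tser k r s m := by
  have h : m ≤ r * m ^ 2 + s * m := by nlinarith
  exact dvd_mul_of_dvd_left (pow_dvd_pow X h) _

lemma coeff_eq_of_dvd {N : ℕ} {x y : PowerSeries ℚ}
    (h : (X : PowerSeries ℚ) ^ (N + 1) ∣ x - y) :
    PowerSeries.coeff (R := ℚ) N x = PowerSeries.coeff (R := ℚ) N y := by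
  have := (PowerSeries.X_pow_dvd_iff.mp h) N (Nat.lt_succ_self N)
  rw [map_sub, sub_eq_zero] at this
  exact this

lemma dvd_sub_mul {D x x' y y' : PowerSeries ℚ} (hx : D ∣ x - x') (hy : D ∣ y - y') :
    D ∣ x * y - x' * y' := by
  have h : x * y - x' * y' = (x - x') * y + x' * (y - y') := by ring
  rw [h]
  exact dvd_add (hx.mul_right y) (hy.mul_left x')

lemma tser_pow (k r s m n : ℕ) : tser (n * k) (n * r) (n * s) m = tser k r s m ^ n := by
  unfold tser dFac
  have h1 : (0:ℤ) ≤ ((n * k : ℕ) : ℤ) := Int.natCast_nonneg _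
  have h2 : (0:ℤ) ≤ ((k : ℕ) : ℤ) := Int.natCast_nonneg _
  rw [if_pos h1, if_pos h2, mul_pow, ← pow_mul, ← pow_mul]
  congr 1
  · congr 1; ring
  · simp only [Int.toNat_natCast]; ring_nf

lemma coeff_pow_eq_zero {f : PowerSeries (PowerSeries ℚ)}
    (hf : PowerSeries.constantCoeff (R := PowerSeries ℚ) f = 0) {j m : ℕ} (h : j < m) :
    PowerSeries.coeff (R := PowerSeries ℚ) j (f ^ m) = 0 := by
  have h1 : (X : PowerSeries (PowerSeries ℚ)) ^ m ∣ f ^ m :=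
    pow_dvd_pow_of_dvd (PowerSeries.X_dvd_iff.mpr hf) m
  exact PowerSeries.X_pow_dvd_iff.mp h1 j h

lemma expX_coeff_zero (f : PowerSeries (PowerSeries ℚ)) :
    PowerSeries.coeff (R := PowerSeries ℚ) 0 (expX f) = 1 := by
  simp [expX]

lemma mem_strictTuples {a N : ℕ} {f : Fin a → ℕ} :
    f ∈ strictTuples a N ↔ (∀ j, f j ∈ Finset.Icc 1 N) ∧ StrictMono f := by
  simp [strictTuples, Fintype.mem_piFinset]

lemma sum_strictTuples (a N : ℕ) (g : ℕ → PowerSeries ℚ) :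
    ∑ f ∈ strictTuples a N, ∏ j, g (f j)
      = ∑ S ∈ Finset.powersetCard a (Finset.Icc 1 N), ∏ m ∈ S, g m := by
  refine Finset.sum_nbij' (fun f => Finset.image f Finset.univ)
    (fun S => fun i : Fin a => if h : S.card = a then S.orderEmbOfFin h i else 0)
    ?_ ?_ ?_ ?_ ?_
  · intro f hf
    obtain ⟨hmem, hmono⟩ := mem_strictTuples.mp hf
    rw [Finset.mem_powersetCard]
    constructor
    · intro x hx
      obtain ⟨j, _, rfl⟩ := Finset.mem_image.mp hx
      exact hmem j
    · rw [Finset.card_image_of_injective _ hmono.injective, Finset.card_univ,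
        Fintype.card_fin]
  · intro S hS
    rw [Finset.mem_powersetCard] at hS
    obtain ⟨hsub, hcard⟩ := hS
    rw [mem_strictTuples]
    constructor
    · intro j
      simp only [dif_pos hcard]
      exact hsub (Finset.orderEmbOfFin_mem S hcard j)
    · intro i j hij
      simp only [dif_pos hcard]
      exact (S.orderEmbOfFin hcard).strictMono hij
  · intro f hf
    obtain ⟨hmem, hmono⟩ := mem_strictTuples.mp hf
    have hcard : (Finset.image f Finset.univ).card = a := by
      rw [Finset.card_image_of_injective _ hmono.injective, Finset.card_univ,
        Fintype.card_fin]
    funext i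
    simp only [dif_pos hcard]
    have := Finset.orderEmbOfFin_unique hcard
      (f := f) (fun j => Finset.mem_image_of_mem f (Finset.mem_univ j)) hmono
    exact (congrFun this i).symm
  · intro S hS
    rw [Finset.mem_powersetCard] at hS
    obtain ⟨hsub, hcard⟩ := hS
    simp only [dif_pos hcard]
    apply Finset.coe_injective
    rw [Finset.coe_image, Finset.coe_univ, Set.image_univ]
    exact Finset.range_orderEmbOfFin S hcard
  · intro f hf
    obtain ⟨hmem, hmono⟩ := mem_strictTuples.mp hf
    exact (Finset.prod_image fun x _ y _ h => hmono.injective h).symm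

lemma prod_tser (k r s a : ℕ) (f : Fin a → ℕ) :
    (X : PowerSeries ℚ) ^ (r * (∑ j, (f j) ^ 2) + s * ∑ j, f j) * ∏ j, dFac (f j) (k : ℤ)
      = ∏ j, tser k r s (f j) := by
  unfold tser
  rw [Finset.prod_mul_distrib, Finset.prod_pow_eq_pow_sum]
  congr 2
  rw [Finset.sum_add_distrib, ← Finset.mul_sum, ← Finset.mul_sum]

lemma Bcoeff_eq (a k r s N : ℕ) :
    Bcoeff a (k : ℤ) r s N = PowerSeries.coeff (R := ℚ) N (Esym k r s N a) := by
  unfold Bcoeff Esym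
  rw [← sum_strictTuples a N (tser k r s), map_sum]
  exact Finset.sum_congr rfl fun f _ => congrArg _ (prod_tser k r s a f)

lemma Bser_congr {s : ℕ} (hs : 1 ≤ s) (a k r N : ℕ) :
    (X : PowerSeries ℚ) ^ (N + 1) ∣ Bser a (k : ℤ) r s - Esym k r s N a := by
  rw [PowerSeries.X_pow_dvd_iff]
  intro M hM
  have hMN : M ≤ N := Nat.lt_succ_iff.mp hM
  rw [map_sub, sub_eq_zero]
  show PowerSeries.coeff (R := ℚ) M (Bser a (k:ℤ) r s) = _
  rw [Bser, PowerSeries.coeff_mk, Bcoeff_eq a k r s M]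
  unfold Esym
  rw [map_sum, map_sum]
  apply Finset.sum_subset
  · exact Finset.powersetCard_mono (Finset.Icc_subset_Icc_right hMN)
  · intro S hS hS'
    have hsub : S ⊆ Finset.Icc 1 N := (Finset.mem_powersetCard.mp hS).1
    have : ¬ S ⊆ Finset.Icc 1 M := by
      intro hc
      exact hS' (Finset.mem_powersetCard.mpr ⟨hc, (Finset.mem_powersetCard.mp hS).2⟩)
    obtain ⟨m, hmS, hmn⟩ := Finset.not_subset.mp this
    have hm : m ∈ Finset.Icc 1 N := hsub hmS
    rw [Finset.mem_Icc] at hm hmn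
    have hMm : M + 1 ≤ m := by omega
    have hdvd : (X : PowerSeries ℚ) ^ (M + 1) ∣ ∏ m' ∈ S, tser k r s m' :=
      dvd_trans (dvd_trans (pow_dvd_pow X hMm) (X_pow_dvd_tser hs k r m))
        (Finset.dvd_prod_of_mem _ hmS)
    exact PowerSeries.X_pow_dvd_iff.mp hdvd M (Nat.lt_succ_self M)

lemma Esym_one (k r s N : ℕ) :
    Esym k r s N 1 = ∑ m ∈ Finset.Icc 1 N, tser k r s m := by
  unfold Esym
  rw [Finset.powersetCard_one, Finset.sum_map]
  refine Finset.sum_congr rfl fun m _ => ?_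
  simp

lemma bser_congr {s n : ℕ} (hs : 1 ≤ s) (hn : 1 ≤ n) (k r N : ℕ) :
    (X : PowerSeries ℚ) ^ (N + 1) ∣
      Bser 1 ((n * k : ℕ) : ℤ) (n * r) (n * s) - Psum k r s N n := by
  have h1 : 1 ≤ n * s := Nat.one_le_iff_ne_zero.mpr (by positivity)
  have h := Bser_congr h1 1 (n * k) (n * r) N
  have h2 : Esym (n * k) (n * r) (n * s) N 1 = Psum k r s N n := by
    rw [Esym_one]
    unfold Psum
    exact Finset.sum_congr rfl fun m _ => tser_pow k r s m n
  rwa [h2] at h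

lemma Esym_zero (k r s N : ℕ) : Esym k r s N 0 = 1 := by
  unfold Esym
  rw [Finset.powersetCard_zero, Finset.sum_singleton, Finset.prod_empty]

lemma Bser_zero (k r s : ℕ) : Bser 0 (k : ℤ) r s = 1 := by
  ext N
  rw [Bser, PowerSeries.coeff_mk, Bcoeff_eq, Esym_zero]

lemma newton_eval (k r s N : ℕ) {j : ℕ} (hj : 1 ≤ j) :
    (j : PowerSeries ℚ) * Esym k r s N j =
      ∑ n ∈ Finset.Icc 1 j,
        (-1 : PowerSeries ℚ) ^ (n + 1) * (Psum k r s N n * Esym k r s N (j - n)) := by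
  have hei : Function.Injective (fun i : Fin N => (i : ℕ) + 1) := by
    intro i j h
    have h' : (i : ℕ) + 1 = (j : ℕ) + 1 := h
    exact Fin.ext (by omega)
  have hIcc : Finset.Icc 1 N = Finset.univ.map ⟨fun i : Fin N => (i : ℕ) + 1, hei⟩ := by
    ext m
    simp only [Finset.mem_Icc, Finset.mem_map, Finset.mem_univ, true_and,
      Function.Embedding.coeFn_mk]
    constructor
    · rintro ⟨h1, h2⟩
      refine ⟨⟨m - 1, by omega⟩, ?_⟩
      show m - 1 + 1 = m
      omega
    · rintro ⟨i, rfl⟩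
      have := i.isLt
      refine ⟨?_, ?_⟩
      · show 1 ≤ (i : ℕ) + 1; omega
      · show (i : ℕ) + 1 ≤ N; omega
  have hE : ∀ a, (MvPolynomial.aeval (fun i : Fin N => tser k r s ((i : ℕ) + 1)))
      (MvPolynomial.esymm (Fin N) ℚ a) = Esym k r s N a := by
    intro a
    rw [MvPolynomial.esymm, map_sum, Esym, hIcc, Finset.powersetCard_map, Finset.sum_map]
    refine Finset.sum_congr rfl fun A _ => ?_
    rw [map_prod]
    simp only [MvPolynomial.aeval_X]
    have hmap : ∏ m ∈ A.map (⟨fun i : Fin N => (i : ℕ) + 1, hei⟩ : Fin N ↪ ℕ), tser k r s m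
        = ∏ i ∈ A, tser k r s ((i : ℕ) + 1) := by
      rw [Finset.prod_map]
      simp only [Function.Embedding.coeFn_mk]
    rw [← hmap]
    rfl
  have hP : ∀ n, (MvPolynomial.aeval (fun i : Fin N => tser k r s ((i : ℕ) + 1)))
      (MvPolynomial.psum (Fin N) ℚ n) = Psum k r s N n := by
    intro n
    rw [MvPolynomial.psum, map_sum, Psum, hIcc, Finset.sum_map]
    simp only [map_pow, MvPolynomial.aeval_X, Function.Embedding.coeFn_mk]
  have h := congrArg (MvPolynomial.aeval (fun i : Fin N => tser k r s ((i : ℕ) + 1)))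
    (MvPolynomial.mul_esymm_eq_sum (Fin N) ℚ j)
  rw [map_mul, map_natCast, hE, map_mul, map_pow, map_neg, map_one, map_sum] at h
  rw [h, Finset.mul_sum]
  refine Finset.sum_nbij' (fun a => a.2) (fun n => (j - n, n)) ?_ ?_ ?_ ?_ ?_
  · intro a ha
    rw [Finset.mem_filter, Finset.HasAntidiagonal.mem_antidiagonal] at ha
    rw [Finset.mem_Icc]
    refine ⟨?_, ?_⟩
    · show 1 ≤ a.2; omega
    · show a.2 ≤ j; omega
  · intro n hn
    rw [Finset.mem_Icc] at hn
    rw [Finset.mem_filter, Finset.HasAntidiagonal.mem_antidiagonal]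
    refine ⟨?_, ?_⟩
    · show j - n + n = j; omega
    · show j - n < j; omega
  · intro a ha
    rw [Finset.mem_filter, Finset.HasAntidiagonal.mem_antidiagonal] at ha
    have h1 : j - a.2 = a.1 := by omega
    exact Prod.ext_iff.mpr ⟨h1, rfl⟩
  · intro n hn
    rfl
  · intro a ha
    rw [Finset.mem_filter, Finset.HasAntidiagonal.mem_antidiagonal] at ha
    simp only [map_mul, map_pow, map_neg, map_one, hE, hP]
    have h1 : j - a.2 = a.1 := by omega
    rw [h1]
    have h2 : (-1 : PowerSeries ℚ) ^ (j + 1) * (-1) ^ a.1 = (-1) ^ (a.2 + 1) := by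
      rw [← pow_add]
      have h3 : j + 1 + a.1 = 2 * a.1 + (a.2 + 1) := by omega
      rw [h3, pow_add, pow_mul, neg_one_sq, one_pow, one_mul]
    linear_combination (Psum k r s N a.2 * Esym k r s N a.1) * h2

lemma Bser_rec {s : ℕ} (hs : 1 ≤ s) (k r : ℕ) {j : ℕ} (hj : 1 ≤ j) :
    (j : PowerSeries ℚ) * Bser j (k : ℤ) r s =
      ∑ n ∈ Finset.Icc 1 j,
        (-1 : PowerSeries ℚ) ^ (n + 1) *
          (Bser 1 ((n * k : ℕ) : ℤ) (n * r) (n * s) * Bser (j - n) (k : ℤ) r s) := by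
  ext N
  have hL : (X : PowerSeries ℚ) ^ (N + 1) ∣
      (j : PowerSeries ℚ) * Bser j (k : ℤ) r s - (j : PowerSeries ℚ) * Esym k r s N j := by
    rw [← mul_sub]
    exact (Bser_congr hs j k r N).mul_left _
  have hR : (X : PowerSeries ℚ) ^ (N + 1) ∣
      (∑ n ∈ Finset.Icc 1 j,
        (-1 : PowerSeries ℚ) ^ (n + 1) *
          (Bser 1 ((n * k : ℕ) : ℤ) (n * r) (n * s) * Bser (j - n) (k : ℤ) r s)) -
      ∑ n ∈ Finset.Icc 1 j,
        (-1 : PowerSeries ℚ) ^ (n + 1) * (Psum k r s N n * Esym k r s N (j - n)) := by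
    rw [← Finset.sum_sub_distrib]
    refine Finset.dvd_sum fun n hn => ?_
    rw [← mul_sub]
    have hn1 : 1 ≤ n := (Finset.mem_Icc.mp hn).1
    exact (dvd_sub_mul (bser_congr hs hn1 k r N) (Bser_congr hs (j - n) k r N)).mul_left _
  rw [coeff_eq_of_dvd hL, coeff_eq_of_dvd hR, newton_eval k r s N hj]

lemma derivFun_pow (g : PowerSeries (PowerSeries ℚ)) (m : ℕ) :
    PowerSeries.derivativeFun (g ^ (m + 1)) =
      (m + 1) • (g ^ m * PowerSeries.derivativeFun g) := by
  induction m with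
  | zero => simp
  | succ m ih =>
      have h2 : g ^ (m + 2) = g * g ^ (m + 1) := by ring
      rw [h2, PowerSeries.derivativeFun_mul, ih, smul_eq_mul, smul_eq_mul, mul_smul_comm]
      rw [show g * (g ^ m * PowerSeries.derivativeFun g)
          = g ^ (m + 1) * PowerSeries.derivativeFun g from by ring]
      exact (succ_nsmul (g ^ (m + 1) * PowerSeries.derivativeFun g) (m + 1)).symm

lemma coeff_derivativeFun' {R : Type*} [CommSemiring R] (f : PowerSeries R) (n : ℕ) :
    PowerSeries.coeff n (PowerSeries.derivativeFun f) = PowerSeries.coeff (n + 1) f * (n + 1) :=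
  PowerSeries.coeff_derivative f n

lemma expX_rec {f : PowerSeries (PowerSeries ℚ)}
    (hf : PowerSeries.constantCoeff (R := PowerSeries ℚ) f = 0) (j : ℕ) :
    ((j + 1 : ℕ) : PowerSeries ℚ) * PowerSeries.coeff (R := PowerSeries ℚ) (j + 1) (expX f) =
      ∑ n ∈ Finset.Icc 1 (j + 1),
        ((n : ℕ) : PowerSeries ℚ) * PowerSeries.coeff (R := PowerSeries ℚ) n f *
          PowerSeries.coeff (R := PowerSeries ℚ) (j + 1 - n) (expX f) := by
  classical
  have hu : ∀ i, PowerSeries.coeff (R := PowerSeries ℚ) i (expX f)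
      = ∑ m ∈ Finset.range (i + 1),
          ((m.factorial : ℚ)⁻¹) • PowerSeries.coeff (R := PowerSeries ℚ) i (f ^ m) := fun i => by
    rw [expX, PowerSeries.coeff_mk]
  have step1 : ((j + 1 : ℕ) : PowerSeries ℚ) * PowerSeries.coeff (R := PowerSeries ℚ) (j + 1) (expX f)
      = ∑ m ∈ Finset.range (j + 2),
          ((m.factorial : ℚ)⁻¹) • PowerSeries.coeff (R := PowerSeries ℚ) j
            ((PowerSeries.derivativeFun) (f ^ m)) := by
    rw [hu (j + 1), Finset.mul_sum]
    refine Finset.sum_congr rfl fun m _ => ?_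
    rw [mul_smul_comm, coeff_derivativeFun']
    congr 1
    push_cast
    ring
  have step2 : ∀ m : ℕ, PowerSeries.coeff (R := PowerSeries ℚ) j ((PowerSeries.derivativeFun) (f ^ (m + 1)))
      = (m + 1) • ∑ p ∈ Finset.HasAntidiagonal.antidiagonal j,
          PowerSeries.coeff (R := PowerSeries ℚ) p.1 (f ^ m) *
            (PowerSeries.coeff (R := PowerSeries ℚ) (p.2 + 1) f * ((p.2 : PowerSeries ℚ) + 1)) := by
    intro m
    rw [derivFun_pow]
    rw [map_nsmul]
    congr 1
    rw [PowerSeries.coeff_mul]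
    refine Finset.sum_congr rfl fun p _ => ?_
    rw [coeff_derivativeFun']
  have hfact : ∀ (m : ℕ) (z : PowerSeries ℚ),
      (((m + 1).factorial : ℚ)⁻¹) • ((m + 1) • z) = ((m.factorial : ℚ)⁻¹) • z := by
    intro m z
    rw [← Nat.cast_smul_eq_nsmul ℚ (m + 1) z, smul_smul]
    congr 1
    rw [Nat.factorial_succ]
    push_cast
    have h1 : (m.factorial : ℚ) ≠ 0 := Nat.cast_ne_zero.mpr m.factorial_ne_zero
    have h2 : ((m : ℚ) + 1) ≠ 0 := by positivity
    field_simp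
  rw [step1, Finset.sum_range_succ' _ (j + 1)]
  have hzero : (((0 : ℕ).factorial : ℚ)⁻¹) •
      PowerSeries.coeff (R := PowerSeries ℚ) j ((PowerSeries.derivativeFun) (f ^ 0)) = 0 := by
    simp [pow_zero, PowerSeries.derivativeFun_one]
  rw [hzero, add_zero]
  calc ∑ m ∈ Finset.range (j + 1), (((m + 1).factorial : ℚ)⁻¹) •
        PowerSeries.coeff (R := PowerSeries ℚ) j ((PowerSeries.derivativeFun) (f ^ (m + 1)))
      = ∑ m ∈ Finset.range (j + 1), ∑ p ∈ Finset.HasAntidiagonal.antidiagonal j,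
          ((m.factorial : ℚ)⁻¹) • (PowerSeries.coeff (R := PowerSeries ℚ) p.1 (f ^ m) *
            (PowerSeries.coeff (R := PowerSeries ℚ) (p.2 + 1) f * ((p.2 : PowerSeries ℚ) + 1))) := by
        refine Finset.sum_congr rfl fun m _ => ?_
        rw [step2 m, hfact, Finset.smul_sum]
    _ = ∑ p ∈ Finset.HasAntidiagonal.antidiagonal j, (∑ m ∈ Finset.range (j + 1),
          ((m.factorial : ℚ)⁻¹) • PowerSeries.coeff (R := PowerSeries ℚ) p.1 (f ^ m)) *
            (PowerSeries.coeff (R := PowerSeries ℚ) (p.2 + 1) f * ((p.2 : PowerSeries ℚ) + 1)) := by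
        rw [Finset.sum_comm]
        refine Finset.sum_congr rfl fun p _ => ?_
        rw [Finset.sum_mul]
        exact Finset.sum_congr rfl fun m _ => (smul_mul_assoc _ _ _).symm
    _ = ∑ p ∈ Finset.HasAntidiagonal.antidiagonal j, PowerSeries.coeff (R := PowerSeries ℚ) p.1 (expX f) *
            (PowerSeries.coeff (R := PowerSeries ℚ) (p.2 + 1) f * ((p.2 : PowerSeries ℚ) + 1)) := by
        refine Finset.sum_congr rfl fun p hp => ?_
        have hp1 : p.1 ≤ j := by
          rw [Finset.HasAntidiagonal.mem_antidiagonal] at hp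
          omega
        congr 1
        rw [hu p.1]
        refine (Finset.sum_subset (by intro x hx; rw [Finset.mem_range] at *; omega)
          fun m _ hm => ?_).symm
        rw [Finset.mem_range, not_lt] at hm
        rw [coeff_pow_eq_zero hf (by omega), smul_zero]
    _ = ∑ n ∈ Finset.Icc 1 (j + 1),
          ((n : ℕ) : PowerSeries ℚ) * PowerSeries.coeff (R := PowerSeries ℚ) n f *
            PowerSeries.coeff (R := PowerSeries ℚ) (j + 1 - n) (expX f) := by
        refine Finset.sum_nbij' (fun p => p.2 + 1) (fun n => (j + 1 - n, n - 1)) ?_ ?_ ?_ ?_ ?_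
        · intro p hp
          rw [Finset.HasAntidiagonal.mem_antidiagonal] at hp
          rw [Finset.mem_Icc]
          refine ⟨?_, ?_⟩
          · show 1 ≤ p.2 + 1; omega
          · show p.2 + 1 ≤ j + 1; omega
        · intro n hn
          rw [Finset.mem_Icc] at hn
          rw [Finset.HasAntidiagonal.mem_antidiagonal]
          show j + 1 - n + (n - 1) = j
          omega
        · intro p hp
          rw [Finset.HasAntidiagonal.mem_antidiagonal] at hp
          refine Prod.ext_iff.mpr ⟨?_, ?_⟩
          · show j + 1 - (p.2 + 1) = p.1; omega
          · show p.2 + 1 - 1 = p.2; omega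
        · intro n hn
          rw [Finset.mem_Icc] at hn
          show n - 1 + 1 = n
          omega
        · intro p hp
          rw [Finset.HasAntidiagonal.mem_antidiagonal] at hp
          have h1 : j + 1 - (p.2 + 1) = p.1 := by omega
          show _ = ((p.2 + 1 : ℕ) : PowerSeries ℚ) * PowerSeries.coeff (R := PowerSeries ℚ) (p.2 + 1) f *
            PowerSeries.coeff (R := PowerSeries ℚ) (j + 1 - (p.2 + 1)) (expX f)
          rw [h1]
          push_cast
          ring

/-- Proposition 4.1 and its proof.  For `k, r, s ∈ ℕ` (positive), in
`ℚ⟦q⟧⟦X⟧`: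
`exp(Σ_{n≥1} ((-1)^{n+1}/n) ℬ_{1,nk,nr,ns}(q) Xⁿ) = Σ_{j≥0} ℬ_{j,k,r,s}(q) X^j`
(with `ℬ_{0,k,r,s} = 1`).  In particular each `ℬ_{a,k,r,s}` is a polynomial of degree at
most `a` with rational coefficients in the series `ℬ_{1,nk,nr,ns}`, `1 ≤ n ≤ a`. -/

theorem B_exp_identity (k r s : ℕ) (hk : 1 ≤ k) (hr : 1 ≤ r) (hs : 1 ≤ s) :
    expX (PowerSeries.mk fun n =>
        if n = 0 then 0 else
          ((-1 : ℚ) ^ (n + 1) / n) • Bser 1 ((n * k : ℕ) : ℤ) (n * r) (n * s)) =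
      PowerSeries.mk (fun j => Bser j (k : ℤ) r s) ∧
    ∀ a : ℕ, 1 ≤ a → ∃ Q : MvPolynomial (Fin a) ℚ,
      Q.totalDegree ≤ a ∧
      Bser a (k : ℤ) r s =
        MvPolynomial.aeval
          (fun i : Fin a =>
            Bser 1 ((((i : ℕ) + 1) * k : ℕ) : ℤ) (((i : ℕ) + 1) * r) (((i : ℕ) + 1) * s)) Q := by
  set b : ℕ → PowerSeries ℚ :=
    fun n => Bser 1 ((n * k : ℕ) : ℤ) (n * r) (n * s) with hb
  set f : PowerSeries (PowerSeries ℚ) := PowerSeries.mk fun n =>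
    if n = 0 then 0 else ((-1 : ℚ) ^ (n + 1) / n) • b n with hfdef
  have hf : PowerSeries.constantCoeff (R := PowerSeries ℚ) f = 0 := by
    rw [← PowerSeries.coeff_zero_eq_constantCoeff_apply, hfdef, PowerSeries.coeff_mk, if_pos rfl]
  have hterm : ∀ n : ℕ, 1 ≤ n →
      ((n : ℕ) : PowerSeries ℚ) * PowerSeries.coeff (R := PowerSeries ℚ) n f
        = (-1 : PowerSeries ℚ) ^ (n + 1) * b n := by
    intro n hn
    rw [hfdef, PowerSeries.coeff_mk, if_neg (by omega)]
    rw [PowerSeries.smul_eq_C_mul, ← mul_assoc,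
      show ((n : ℕ) : PowerSeries ℚ) = PowerSeries.C (R := ℚ) ((n : ℕ) : ℚ) from
        (map_natCast _ _).symm, ← map_mul]
    have hc : ((n : ℕ) : ℚ) * ((-1 : ℚ) ^ (n + 1) / n) = (-1 : ℚ) ^ (n + 1) := by
      have hn0 : ((n : ℕ) : ℚ) ≠ 0 := Nat.cast_ne_zero.mpr (by omega)
      field_simp
    rw [hc, map_pow, map_neg, map_one]
  -- coefficients of expX f agree with Bser
  have key : ∀ j : ℕ, PowerSeries.coeff (R := PowerSeries ℚ) j (expX f) = Bser j (k : ℤ) r s := by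
    intro j
    induction j using Nat.strong_induction_on with
    | _ j ih =>
      match j with
      | 0 => rw [expX_coeff_zero, Bser_zero]
      | Nat.succ j =>
        have h1 := expX_rec hf j
        have h2 : ∑ n ∈ Finset.Icc 1 (j + 1),
            ((n : ℕ) : PowerSeries ℚ) * PowerSeries.coeff (R := PowerSeries ℚ) n f *
              PowerSeries.coeff (R := PowerSeries ℚ) (j + 1 - n) (expX f)
            = ∑ n ∈ Finset.Icc 1 (j + 1),
              (-1 : PowerSeries ℚ) ^ (n + 1) * (b n * Bser (j + 1 - n) (k : ℤ) r s) := by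
          refine Finset.sum_congr rfl fun n hn => ?_
          rw [Finset.mem_Icc] at hn
          rw [hterm n hn.1, ih (j + 1 - n) (by omega), mul_assoc]
        have h3 := Bser_rec hs k r (Nat.succ_le_succ (Nat.zero_le j) : 1 ≤ j + 1)
        have h4 : ((j + 1 : ℕ) : PowerSeries ℚ) *
            PowerSeries.coeff (R := PowerSeries ℚ) (j + 1) (expX f)
            = ((j + 1 : ℕ) : PowerSeries ℚ) * Bser (j + 1) (k : ℤ) r s := by
          rw [h1, h2]
          exact h3.symm
        have hne : ((j + 1 : ℕ) : PowerSeries ℚ) ≠ 0 := by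
          intro hcon
          have := congrArg (PowerSeries.constantCoeff (R := ℚ)) hcon
          rw [map_natCast, map_zero] at this
          exact_mod_cast this
        exact mul_left_cancel₀ hne h4
  constructor
  · refine PowerSeries.ext fun j => ?_
    rw [PowerSeries.coeff_mk]
    exact key j
  · -- part 2
    have part2 : ∀ j : ℕ, ∀ a : ℕ, j ≤ a → ∃ Q : MvPolynomial (Fin a) ℚ,
        Q.totalDegree ≤ j ∧
        Bser j (k : ℤ) r s =
          MvPolynomial.aeval
            (fun i : Fin a =>
              Bser 1 ((((i : ℕ) + 1) * k : ℕ) : ℤ) (((i : ℕ) + 1) * r) (((i : ℕ) + 1) * s)) Q := by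
      intro j
      induction j using Nat.strong_induction_on with
      | _ j ih =>
        match j with
        | 0 =>
          intro a ha
          exact ⟨1, by simp [MvPolynomial.totalDegree_one], by rw [Bser_zero, map_one]⟩
        | Nat.succ j =>
          intro a ha
          have ha1 : 1 ≤ a := by omega
          set v : Fin a → PowerSeries ℚ := fun i =>
            Bser 1 ((((i : ℕ) + 1) * k : ℕ) : ℤ) (((i : ℕ) + 1) * r) (((i : ℕ) + 1) * s) with hv
          have hsub : ∀ n : ℕ, 1 ≤ n → n ≤ j + 1 →
              ∃ Q : MvPolynomial (Fin a) ℚ, Q.totalDegree ≤ j + 1 - n ∧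
                Bser (j + 1 - n) (k : ℤ) r s = MvPolynomial.aeval v Q :=
            fun n h1 h2 => ih (j + 1 - n) (by omega) a (by omega)
          let Qs : ℕ → MvPolynomial (Fin a) ℚ := fun n =>
            if h : 1 ≤ n ∧ n ≤ j + 1 then Classical.choose (hsub n h.1 h.2) else 0
          have hQs : ∀ n : ℕ, 1 ≤ n → n ≤ j + 1 →
              (Qs n).totalDegree ≤ j + 1 - n ∧
              Bser (j + 1 - n) (k : ℤ) r s = MvPolynomial.aeval v (Qs n) := by
            intro n h1 h2
            have : Qs n = Classical.choose (hsub n h1 h2) := by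
              simp only [Qs, dif_pos (And.intro h1 h2)]
            rw [this]
            exact Classical.choose_spec (hsub n h1 h2)
          let emb : ℕ → Fin a := fun n =>
            if h : n - 1 < a then ⟨n - 1, h⟩ else ⟨0, by omega⟩
          have hvemb : ∀ n : ℕ, 1 ≤ n → n ≤ j + 1 → v (emb n) = b n := by
            intro n h1 h2
            have hlt : n - 1 < a := by omega
            have h3 : emb n = ⟨n - 1, hlt⟩ := by simp only [emb, dif_pos hlt]
            rw [h3, hv, hb]
            show Bser 1 (((n - 1 + 1) * k : ℕ) : ℤ) ((n - 1 + 1) * r) ((n - 1 + 1) * s) = _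
            rw [show n - 1 + 1 = n from by omega]
          refine ⟨((j + 1 : ℚ))⁻¹ • ∑ n ∈ Finset.Icc 1 (j + 1),
            ((-1 : ℚ) ^ (n + 1)) • (MvPolynomial.X (emb n) * Qs n), ?_, ?_⟩
          · refine le_trans (MvPolynomial.totalDegree_smul_le _ _) ?_
            refine le_trans (MvPolynomial.totalDegree_finset_sum _ _) ?_
            refine Finset.sup_le fun n hn => ?_
            rw [Finset.mem_Icc] at hn
            refine le_trans (MvPolynomial.totalDegree_smul_le _ _) ?_
            refine le_trans (MvPolynomial.totalDegree_mul _ _) ?_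
            have := (hQs n hn.1 hn.2).1
            have hX : (MvPolynomial.X (emb n) : MvPolynomial (Fin a) ℚ).totalDegree = 1 :=
              MvPolynomial.totalDegree_X _
            omega
          · have hinv : ∀ x : PowerSeries ℚ,
                ((j + 1 : ℚ))⁻¹ • (((j + 1 : ℕ) : PowerSeries ℚ) * x) = x := by
              intro x
              rw [PowerSeries.smul_eq_C_mul, ← mul_assoc,
                show ((j + 1 : ℕ) : PowerSeries ℚ) = PowerSeries.C (R := ℚ) ((j + 1 : ℕ) : ℚ) from
                  (map_natCast _ _).symm, ← map_mul]
              have hc : ((j + 1 : ℚ))⁻¹ * ((j + 1 : ℕ) : ℚ) = 1 := by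
                have hne : ((j : ℚ) + 1) ≠ 0 := by positivity
                push_cast
                exact inv_mul_cancel₀ hne
              rw [hc, map_one, one_mul]
            have h3 := Bser_rec hs k r (Nat.succ_le_succ (Nat.zero_le j) : 1 ≤ j + 1)
            have h5 : Bser (j + 1) (k : ℤ) r s
                = ((j + 1 : ℚ))⁻¹ • ∑ n ∈ Finset.Icc 1 (j + 1),
                    (-1 : PowerSeries ℚ) ^ (n + 1) *
                      (b n * Bser (j + 1 - n) (k : ℤ) r s) := by
              rw [← hinv (Bser (j + 1) (k : ℤ) r s)]
              exact congrArg (fun z => ((j + 1 : ℚ))⁻¹ • z) h3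
            rw [h5, map_smul, map_sum]
            congr 1
            refine Finset.sum_congr rfl fun n hn => ?_
            rw [Finset.mem_Icc] at hn
            rw [map_smul, map_mul, MvPolynomial.aeval_X, hvemb n hn.1 hn.2,
              ← (hQs n hn.1 hn.2).2]
            simp only [PowerSeries.smul_eq_C_mul, map_pow, map_neg, map_one]
    intro a ha
    obtain ⟨Q, hQ1, hQ2⟩ := part2 a a le_rfl
    exact ⟨Q, hQ1, hQ2⟩
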